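/- For any finite collection of future-pointing unit timelike vectors u₁,…,u_N and complex numbers α₁,…,α_N with Σᵢ αᵢ = 0, one has Σᵢⱼ \overline{αᵢ} αⱼ λᵢⱼ coth λᵢⱼ ≤ 0, where λᵢⱼ is the hyperbolic angle between uᵢ and uⱼ (cosh λᵢⱼ = uᵢ·uⱼ), and λ coth λ is interpreted as 1 when λ = 0. -/

import Mathlib

open scoped ComplexOrder

/-- Minkowski bilinear form on `ℝ⁴` with signature `(+,-,-,-)`. -/
def mink (u v : Fin 4 → ℝ) : ℝ :=
  u 0 * v 0 - u 1 * v 1 - u 2 * v 2 - u 3 * v 3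

/-- Inverse hyperbolic cosine: `arcosh x = log (x + √(x² - 1))`. -/
noncomputable def arcosh (x : ℝ) : ℝ := Real.log (x + Real.sqrt (x ^ 2 - 1))

/-- `λ coth λ`, interpreted as `1` at `λ = 0`. -/
noncomputable def lcoth (l : ℝ) : ℝ :=
  if l = 0 then 1 else l * (Real.cosh l / Real.sinh l)

namespace LcothAux

open MeasureTheory Real Filter

/-- The null vector attached to a point of the plane (stereographic section of the cone). -/
noncomputable def nul (z : ℝ × ℝ) : Fin 4 → ℝ :=
  ![1 + z.1 ^ 2 + z.2 ^ 2, 2 * z.1, 2 * z.2, 1 - z.1 ^ 2 - z.2 ^ 2]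

noncomputable def Qf (u : Fin 4 → ℝ) (z : ℝ × ℝ) : ℝ := mink u (nul z)

lemma nul_null (z : ℝ × ℝ) : mink (nul z) (nul z) = 0 := by
  simp [mink, nul]; ring

lemma nul_zero_pos (z : ℝ × ℝ) : 0 < nul z 0 := by
  simp [nul]; nlinarith [sq_nonneg z.1, sq_nonneg z.2]

lemma Qf_eq (u : Fin 4 → ℝ) (z : ℝ × ℝ) :
    Qf u z = (u 0 + u 3) * (z.1 ^ 2 + z.2 ^ 2) - 2 * u 1 * z.1 - 2 * u 2 * z.2
      + (u 0 - u 3) := by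
  simp [Qf, mink, nul]; ring

lemma a_pos {u : Fin 4 → ℝ} (hu : mink u u = 1) (hu0 : 0 < u 0) : 0 < u 0 + u 3 := by
  simp [mink] at hu; nlinarith [sq_nonneg (u 1), sq_nonneg (u 2), sq_nonneg (u 0 - u 3), sq_nonneg (u 0 + u 3)]

lemma Qf_sq {u : Fin 4 → ℝ} (hu : mink u u = 1) (z : ℝ × ℝ) :
    (u 0 + u 3) * Qf u z
      = ((u 0 + u 3) * z.1 - u 1) ^ 2 + ((u 0 + u 3) * z.2 - u 2) ^ 2 + 1 := by
  simp [mink] at hu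
  rw [Qf_eq]; nlinarith [hu]

lemma Qf_pos {u : Fin 4 → ℝ} (hu : mink u u = 1) (hu0 : 0 < u 0) (z : ℝ × ℝ) :
    0 < Qf u z := by
  have ha := a_pos hu hu0
  have h := Qf_sq hu z
  nlinarith [sq_nonneg ((u 0 + u 3) * z.1 - u 1), sq_nonneg ((u 0 + u 3) * z.2 - u 2)]

lemma one_le_mink {u v : Fin 4 → ℝ} (hu : mink u u = 1) (hv : mink v v = 1)
    (hu0 : 0 < u 0) (hv0 : 0 < v 0) : 1 ≤ mink u v := by
  simp only [mink] at *
  have h1 : (u 1 * v 1 + u 2 * v 2 + u 3 * v 3) ^ 2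
      ≤ (u 1 ^ 2 + u 2 ^ 2 + u 3 ^ 2) * (v 1 ^ 2 + v 2 ^ 2 + v 3 ^ 2) := by
    nlinarith [sq_nonneg (u 1 * v 2 - u 2 * v 1), sq_nonneg (u 1 * v 3 - u 3 * v 1),
      sq_nonneg (u 2 * v 3 - u 3 * v 2)]
  have h2 : (u 0 * v 0 - 1) ^ 2 ≥ (u 1 ^ 2 + u 2 ^ 2 + u 3 ^ 2) * (v 1 ^ 2 + v 2 ^ 2 + v 3 ^ 2) := by
    nlinarith [sq_nonneg (u 0 - v 0)]
  have h3 : 1 ≤ u 0 * v 0 := by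
    nlinarith [sq_nonneg (u 1 ^ 2 + u 2 ^ 2 + u 3 ^ 2 - (v 1 ^ 2 + v 2 ^ 2 + v 3 ^ 2)),
      mul_pos hu0 hv0, sq_nonneg (u 0 * v 0 - 1)]
  nlinarith [h1, h2, h3, sq_nonneg (u 1 * v 1 + u 2 * v 2 + u 3 * v 3)]

lemma mink_nonpos_of_orth_null {P n : Fin 4 → ℝ} (hn : mink n n = 0) (hn0 : 0 < n 0)
    (h : mink P n = 0) : mink P P ≤ 0 := by
  simp only [mink] at *
  have h1 : (P 1 * n 1 + P 2 * n 2 + P 3 * n 3) ^ 2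
      ≤ (P 1 ^ 2 + P 2 ^ 2 + P 3 ^ 2) * (n 1 ^ 2 + n 2 ^ 2 + n 3 ^ 2) := by
    nlinarith [sq_nonneg (P 1 * n 2 - P 2 * n 1), sq_nonneg (P 1 * n 3 - P 3 * n 1),
      sq_nonneg (P 2 * n 3 - P 3 * n 2)]
  have h2 : P 0 * n 0 = P 1 * n 1 + P 2 * n 2 + P 3 * n 3 := by linarith
  have h3 : n 1 ^ 2 + n 2 ^ 2 + n 3 ^ 2 = n 0 ^ 2 := by nlinarith
  have h4 : P 0 ^ 2 * n 0 ^ 2 ≤ (P 1 ^ 2 + P 2 ^ 2 + P 3 ^ 2) * n 0 ^ 2 := by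
    calc P 0 ^ 2 * n 0 ^ 2 = (P 0 * n 0) ^ 2 := by ring
    _ = (P 1 * n 1 + P 2 * n 2 + P 3 * n 3) ^ 2 := by rw [h2]
    _ ≤ (P 1 ^ 2 + P 2 ^ 2 + P 3 ^ 2) * (n 1 ^ 2 + n 2 ^ 2 + n 3 ^ 2) := h1
    _ = (P 1 ^ 2 + P 2 ^ 2 + P 3 ^ 2) * n 0 ^ 2 := by rw [h3]
  have h5 : P 0 ^ 2 ≤ P 1 ^ 2 + P 2 ^ 2 + P 3 ^ 2 :=
    le_of_mul_le_mul_right h4 (by positivity : (0:ℝ) < n 0 ^ 2)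
  nlinarith
lemma arcosh_one : _root_.arcosh 1 = 0 := by simp [_root_.arcosh]

lemma lcoth_arcosh {c : ℝ} (hc : 1 < c) :
    lcoth (_root_.arcosh c) = c * Real.log (c + Real.sqrt (c ^ 2 - 1)) / Real.sqrt (c ^ 2 - 1) := by
  have h1 : (0:ℝ) ≤ c ^ 2 - 1 := by nlinarith
  set s := Real.sqrt (c ^ 2 - 1) with hsdef
  have hs2 : s ^ 2 = c ^ 2 - 1 := Real.sq_sqrt h1
  have hspos : 0 < s := Real.sqrt_pos.2 (by nlinarith)
  have hx : (1:ℝ) < c + s := by nlinarith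
  have hxpos : (0:ℝ) < c + s := by linarith
  have hinv : (c + s)⁻¹ = c - s := inv_eq_of_mul_eq_one_right (by nlinarith)
  have hlog : Real.log (c + s) ≠ 0 := ne_of_gt (Real.log_pos hx)
  rw [_root_.arcosh, ← hsdef, lcoth, if_neg hlog, Real.cosh_log hxpos, Real.sinh_log hxpos, hinv]
  have hss : s ≠ 0 := ne_of_gt hspos
  field_simp
  rw [div_eq_iff (sub_ne_zero.2 (by intro h; linarith))]; ring

lemma D_pos {c : ℝ} (hc : 1 ≤ c) {t : ℝ} (ht : t ∈ Set.uIcc (0:ℝ) 1) :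
    0 < (1 - t) ^ 2 + t ^ 2 + 2 * t * (1 - t) * c := by
  rw [Set.uIcc_of_le (by norm_num : (0:ℝ) ≤ 1)] at ht
  obtain ⟨h0, h1⟩ := ht
  nlinarith [mul_nonneg (mul_nonneg h0 (by linarith : (0:ℝ) ≤ 1 - t)) (by linarith : (0:ℝ) ≤ c - 1)]

lemma tint {c : ℝ} (hc : 1 < c) :
    ∫ t in (0:ℝ)..1, ((1 - t) ^ 2 + t ^ 2 + 2 * t * (1 - t) * c)⁻¹
      = Real.log (c + Real.sqrt (c ^ 2 - 1)) / Real.sqrt (c ^ 2 - 1) := by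
  have h1 : (0:ℝ) ≤ c ^ 2 - 1 := by nlinarith
  set s := Real.sqrt (c ^ 2 - 1) with hsdef
  have hs2 : s ^ 2 = c ^ 2 - 1 := Real.sq_sqrt h1
  have hspos : 0 < s := Real.sqrt_pos.2 (by nlinarith)
  have hsc : c - 1 < s := by nlinarith
  set F : ℝ → ℝ := fun t => (1/(2*s)) *
    (Real.log (s + (c-1)*(2*t-1)) - Real.log (s + (c-1)*(1-2*t))) with hF
  have hderiv : ∀ t ∈ Set.uIcc (0:ℝ) 1,
      HasDerivAt F (((1 - t) ^ 2 + t ^ 2 + 2 * t * (1 - t) * c)⁻¹) t := by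
    intro t ht
    have hD := D_pos (le_of_lt hc) ht
    rw [Set.uIcc_of_le (by norm_num : (0:ℝ) ≤ 1)] at ht
    obtain ⟨h0, hle1⟩ := ht
    have hX : 0 < s + (c-1)*(2*t-1) := by nlinarith
    have hY : 0 < s + (c-1)*(1-2*t) := by nlinarith
    have dX : HasDerivAt (fun t : ℝ => s + (c-1)*(2*t-1)) ((c-1)*2) t := by
      have := (((hasDerivAt_id t).const_mul (2:ℝ)).sub_const 1).const_mul (c-1) |>.const_add s
      simpa using this
    have dY : HasDerivAt (fun t : ℝ => s + (c-1)*(1-2*t)) (-((c-1)*2)) t := by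
      have := (((hasDerivAt_id t).const_mul (2:ℝ)).const_sub 1).const_mul (c-1) |>.const_add s
      simpa [mul_comm] using this
    have dlX := dX.log (ne_of_gt hX)
    have dlY := dY.log (ne_of_gt hY)
    have := (dlX.sub dlY).const_mul (1/(2*s))
    refine this.congr_deriv ?_; symm
    have hXne := ne_of_gt hX
    have hYne := ne_of_gt hY
    have hDne := ne_of_gt hD
    have hsne := ne_of_gt hspos
    have hc1 : c - 1 ≠ 0 := by intro h; linarith
    rw [show (1 - t) ^ 2 + t ^ 2 + 2 * t * (1 - t) * c
        = (s + (c - 1) * (2 * t - 1)) * (s + (c - 1) * (1 - 2 * t)) / (2 * (c - 1)) by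
      field_simp; linear_combination (-1) * hs2]
    field_simp
    ring
  have hint : IntervalIntegrable
      (fun t => ((1 - t) ^ 2 + t ^ 2 + 2 * t * (1 - t) * c)⁻¹) volume 0 1 := by
    apply ContinuousOn.intervalIntegrable
    apply ContinuousOn.inv₀
    · fun_prop
    · intro t ht; exact ne_of_gt (D_pos (le_of_lt hc) ht)
  rw [intervalIntegral.integral_eq_sub_of_hasDerivAt hderiv hint]
  have hY0 : (0:ℝ) < s - c + 1 := by nlinarith
  have e2 : Real.log (s + c - 1) = Real.log (c + s) + Real.log (s - c + 1) := by
    rw [show s + c - 1 = (c+s)*(s-c+1) by nlinarith]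
    exact Real.log_mul (by positivity) (ne_of_gt hY0)
  have hF1 : F 1 = (1/(2*s)) * (Real.log (s + c - 1) - Real.log (s - c + 1)) := by
    rw [hF]; norm_num; ring_nf; tauto
  have hF0 : F 0 = (1/(2*s)) * (Real.log (s - c + 1) - Real.log (s + c - 1)) := by
    rw [hF]; norm_num; ring_nf; tauto
  rw [hF1, hF0, e2]
  field_simp
  ring
lemma rint (D : ℝ) (hD : 0 < D) :
    ∫ r in Set.Ioi (0:ℝ), r * ((r ^ 2 + D) ^ 2)⁻¹ = 1 / (2 * D) := by
  have hderiv : ∀ x ∈ Set.Ici (0:ℝ),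
      HasDerivAt (fun x : ℝ => -(1/2) * (x ^ 2 + D)⁻¹) (x * ((x ^ 2 + D) ^ 2)⁻¹) x := by
    intro x _
    have h1 : HasDerivAt (fun x : ℝ => x ^ 2 + D) (2 * x) x := by
      simpa using (hasDerivAt_pow 2 x).add_const D
    have hne : x ^ 2 + D ≠ 0 := by positivity
    have h2 := (h1.inv hne).const_mul (-(1/2) : ℝ)
    refine h2.congr_deriv ?_; symm
    field_simp
  have hpos : ∀ x ∈ Set.Ioi (0:ℝ), 0 ≤ x * ((x ^ 2 + D) ^ 2)⁻¹ := by
    intro x hx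
    have : (0:ℝ) < x := hx
    positivity
  have htend : Tendsto (fun x : ℝ => -(1/2) * (x ^ 2 + D)⁻¹) atTop (nhds 0) := by
    have h1 : Tendsto (fun x : ℝ => x ^ 2 + D) atTop atTop :=
      tendsto_atTop_add_const_right _ D (tendsto_pow_atTop (by norm_num))
    have := h1.inv_tendsto_atTop.const_mul (-(1/2) : ℝ)
    simpa using this
  have := integral_Ioi_of_hasDerivAt_of_nonneg' hderiv hpos htend
  rw [this]
  norm_num
  field_simp

lemma radial (D : ℝ) (hD : 0 < D) :
    ∫ z : ℝ × ℝ, (((z.1 ^ 2 + z.2 ^ 2 + D) ^ 2)⁻¹) = π / D := by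
  rw [← integral_comp_polarCoord_symm]
  have htgt : polarCoord.target = Set.Ioi (0:ℝ) ×ˢ Set.Ioo (-π) π := rfl
  have hcongr : ∀ p ∈ polarCoord.target,
      p.1 • ((((polarCoord.symm p).1 ^ 2 + (polarCoord.symm p).2 ^ 2 + D) ^ 2)⁻¹)
        = p.1 * ((p.1 ^ 2 + D) ^ 2)⁻¹ := by
    intro p _
    have hsq : (polarCoord.symm p).1 ^ 2 + (polarCoord.symm p).2 ^ 2 = p.1 ^ 2 := by
      have : polarCoord.symm p = (p.1 * cos p.2, p.1 * sin p.2) := rfl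
      rw [this]
      linear_combination (p.1 ^ 2) * (sin_sq_add_cos_sq p.2)
    rw [hsq, smul_eq_mul]
  rw [setIntegral_congr_fun (by exact polarCoord.open_target.measurableSet) hcongr]
  rw [htgt, MeasureTheory.Measure.volume_eq_prod, ← Measure.prod_restrict]
  have : ∀ p : ℝ × ℝ, p.1 * ((p.1 ^ 2 + D) ^ 2)⁻¹
      = (fun r => r * ((r ^ 2 + D) ^ 2)⁻¹) p.1 * (fun _ : ℝ => (1:ℝ)) p.2 := by
    intro p; simp
  rw [show (fun p : ℝ × ℝ => p.1 * ((p.1 ^ 2 + D) ^ 2)⁻¹)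
      = fun p : ℝ × ℝ => (fun r => r * ((r ^ 2 + D) ^ 2)⁻¹) p.1 * (fun _ : ℝ => (1:ℝ)) p.2
    from funext fun p => by simp]
  rw [integral_prod_mul (f := fun r : ℝ => r * ((r ^ 2 + D) ^ 2)⁻¹) (g := fun _ : ℝ => (1:ℝ))]
  rw [rint D hD]
  simp [Real.volume_Ioo]
  rw [max_eq_left (by positivity)]
  field_simp
  ring
lemma int_quad (A b1 b2 D : ℝ) (hA : 0 < A) (hD : 0 < D) :
    ∫ z : ℝ × ℝ, (((A * z.1 - b1) ^ 2 + (A * z.2 - b2) ^ 2 + D) ^ 2)⁻¹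
      = π / (D * A ^ 2) := by
  set g : ℝ × ℝ → ℝ := fun w => ((w.1 ^ 2 + w.2 ^ 2 + D) ^ 2)⁻¹ with hg
  have hAne : A ≠ 0 := ne_of_gt hA
  have step1 : (fun z : ℝ × ℝ => (((A * z.1 - b1) ^ 2 + (A * z.2 - b2) ^ 2 + D) ^ 2)⁻¹)
      = fun z : ℝ × ℝ => g (A • (z + -(A⁻¹ • (b1, b2)))) := by
    funext z
    have : A • (z + -(A⁻¹ • ((b1, b2) : ℝ × ℝ))) = (A * z.1 - b1, A * z.2 - b2) := by
      ext <;> simp [Prod.smul_fst, Prod.smul_snd] <;> field_simp <;> ring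
    rw [this, hg]
  rw [step1, integral_add_right_eq_self (fun z : ℝ × ℝ => g (A • z)) (-(A⁻¹ • (b1, b2)))]
  rw [MeasureTheory.Measure.integral_comp_smul volume g A]
  rw [radial D hD]
  have : Module.finrank ℝ (ℝ × ℝ) = 2 := by
    simp [Module.finrank_prod]
  rw [this]
  rw [abs_of_nonneg (by positivity)]
  rw [smul_eq_mul]
  field_simp
lemma continuous_Qf (u : Fin 4 → ℝ) : Continuous (Qf u) := by
  have : Qf u = fun z : ℝ × ℝ => (u 0 + u 3) * (z.1 ^ 2 + z.2 ^ 2) - 2 * u 1 * z.1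
      - 2 * u 2 * z.2 + (u 0 - u 3) := funext fun z => Qf_eq u z
  rw [this]; fun_prop

lemma integrable_aux (a b : ℝ) (ha : a ≠ 0) :
    Integrable (fun x : ℝ => ((a * x - b) ^ 2 + 1)⁻¹) := by
  have h0 : Integrable (fun x : ℝ => (1 + x ^ 2)⁻¹) := integrable_inv_one_add_sq
  have h1 : Integrable (fun x : ℝ => (1 + (x - b) ^ 2)⁻¹) := h0.comp_sub_right b
  have h2 : Integrable (fun x : ℝ => (1 + (a * x - b) ^ 2)⁻¹) :=
    (integrable_comp_mul_left_iff (fun x : ℝ => (1 + (x - b) ^ 2)⁻¹) ha).2 h1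
  simpa [add_comm] using h2

lemma integrable_Qf_inv_sq {u : Fin 4 → ℝ} (hu : mink u u = 1) (hu0 : 0 < u 0) :
    Integrable (fun z : ℝ × ℝ => ((Qf u z) ^ 2)⁻¹) := by
  have ha := a_pos hu hu0
  set a := u 0 + u 3 with hadef
  have hbound : Integrable (fun z : ℝ × ℝ =>
      a ^ 2 * (((a * z.1 - u 1) ^ 2 + 1)⁻¹ * ((a * z.2 - u 2) ^ 2 + 1)⁻¹)) := by
    exact ((integrable_aux a (u 1) (ne_of_gt ha)).mul_prod
      (integrable_aux a (u 2) (ne_of_gt ha))).const_mul _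
  apply hbound.mono'
  · apply Measurable.aestronglyMeasurable
    exact (((continuous_Qf u).pow 2).measurable).inv
  · refine Eventually.of_forall fun z => ?_
    have hq := Qf_pos hu hu0 z
    have hsq := Qf_sq hu z
    rw [Real.norm_eq_abs, abs_of_nonneg (by positivity)]
    set X := a * z.1 - u 1
    set Y := a * z.2 - u 2
    have hX : (X ^ 2 + 1) * (Y ^ 2 + 1) ≤ (a * Qf u z) ^ 2 := by
      rw [hsq]; nlinarith [sq_nonneg X, sq_nonneg Y, sq_nonneg (X*Y)]
    have hXp : 0 < (X ^ 2 + 1) * (Y ^ 2 + 1) := by positivity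
    have h2 : ((a * Qf u z) ^ 2)⁻¹ ≤ ((X ^ 2 + 1) * (Y ^ 2 + 1))⁻¹ :=
      inv_anti₀ hXp hX
    have h3 : ((a * Qf u z) ^ 2)⁻¹ = (a^2)⁻¹ * ((Qf u z)^2)⁻¹ := by
      rw [mul_pow, mul_inv]
    rw [h3] at h2
    have := mul_le_mul_of_nonneg_left h2 (le_of_lt (by positivity : (0:ℝ) < a ^ 2))
    rw [← mul_assoc, mul_inv_cancel₀ (by positivity : (a:ℝ)^2 ≠ 0), one_mul] at this
    calc ((Qf u z) ^ 2)⁻¹ ≤ a ^ 2 * ((X ^ 2 + 1) * (Y ^ 2 + 1))⁻¹ := this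
    _ = a ^ 2 * ((X ^ 2 + 1)⁻¹ * (Y ^ 2 + 1)⁻¹) := by rw [mul_inv]

lemma feynman {P Q : ℝ} (hP : 0 < P) (hQ : 0 < Q) :
    ∫ t in (0:ℝ)..1, ((P + t * (Q - P)) ^ 2)⁻¹ = (P * Q)⁻¹ := by
  have hSpos : ∀ t ∈ Set.uIcc (0:ℝ) 1, 0 < P + t * (Q - P) := by
    intro t ht
    rw [Set.uIcc_of_le (by norm_num : (0:ℝ) ≤ 1)] at ht
    obtain ⟨h0, h1⟩ := ht
    nlinarith [mul_nonneg h0 hQ.le, mul_nonneg (by linarith : (0:ℝ) ≤ 1 - t) hP.le]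
  have hderiv : ∀ t ∈ Set.uIcc (0:ℝ) 1,
      HasDerivAt (fun t : ℝ => t * (P * (P + t * (Q - P)))⁻¹)
        (((P + t * (Q - P)) ^ 2)⁻¹) t := by
    intro t ht
    have hS := hSpos t ht
    have h1 : HasDerivAt (fun t : ℝ => P + t * (Q - P)) (Q - P) t := by
      simpa using ((hasDerivAt_id t).mul_const (Q - P)).const_add P
    have h2 : HasDerivAt (fun t : ℝ => P * (P + t * (Q - P))) (P * (Q - P)) t :=
      h1.const_mul P
    have hne : P * (P + t * (Q - P)) ≠ 0 := by positivity
    have h3 := (hasDerivAt_id t).mul (h2.inv hne)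
    refine h3.congr_deriv ?_; symm
    simp only [Pi.inv_apply, id]
    field_simp
    ring
  have hint : IntervalIntegrable (fun t : ℝ => ((P + t * (Q - P)) ^ 2)⁻¹) volume 0 1 := by
    apply ContinuousOn.intervalIntegrable
    apply ContinuousOn.inv₀
    · fun_prop
    · intro t ht
      exact ne_of_gt (by have := hSpos t ht; positivity)
  rw [intervalIntegral.integral_eq_sub_of_hasDerivAt hderiv hint]
  norm_num

lemma combo {u v : Fin 4 → ℝ} (hu : mink u u = 1) (hv : mink v v = 1) (t : ℝ) (z : ℝ × ℝ) :
    ((1-t) * (u 0 + u 3) + t * (v 0 + v 3)) * ((1-t) * Qf u z + t * Qf v z)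
      = (((1-t) * (u 0 + u 3) + t * (v 0 + v 3)) * z.1 - ((1-t) * u 1 + t * v 1)) ^ 2
        + (((1-t) * (u 0 + u 3) + t * (v 0 + v 3)) * z.2 - ((1-t) * u 2 + t * v 2)) ^ 2
        + ((1 - t) ^ 2 + t ^ 2 + 2 * t * (1 - t) * mink u v) := by
  simp only [mink] at hu hv ⊢
  rw [Qf_eq, Qf_eq]
  linear_combination ((1-t)^2) * hu + (t^2) * hv

lemma zint {u v : Fin 4 → ℝ} (hu : mink u u = 1) (hv : mink v v = 1)
    (hu0 : 0 < u 0) (hv0 : 0 < v 0) {t : ℝ} (ht : t ∈ Set.Icc (0:ℝ) 1) :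
    ∫ z : ℝ × ℝ, (((1-t) * Qf u z + t * Qf v z) ^ 2)⁻¹
      = π / ((1 - t) ^ 2 + t ^ 2 + 2 * t * (1 - t) * mink u v) := by
  obtain ⟨h0, h1⟩ := ht
  have hau := a_pos hu hu0
  have hav := a_pos hv hv0
  set A := (1-t) * (u 0 + u 3) + t * (v 0 + v 3) with hA
  have hApos : 0 < A := by
    rcases eq_or_lt_of_le h0 with h | h
    · rw [hA, ← h]; simpa using hau
    · have : 0 < t * (v 0 + v 3) := by positivity
      nlinarith [mul_nonneg (by linarith : (0:ℝ) ≤ 1 - t) (le_of_lt hau)]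
  have hc := one_le_mink hu hv hu0 hv0
  set D := (1 - t) ^ 2 + t ^ 2 + 2 * t * (1 - t) * mink u v with hD
  have hDpos : 0 < D := by
    rw [hD]
    nlinarith [mul_nonneg (mul_nonneg h0 (by linarith : (0:ℝ) ≤ 1 - t)) (by linarith : (0:ℝ) ≤ mink u v - 1)]
  have key : ∀ z : ℝ × ℝ, (((1-t) * Qf u z + t * Qf v z) ^ 2)⁻¹
      = A^2 * (((A * z.1 - ((1-t) * u 1 + t * v 1)) ^ 2
          + (A * z.2 - ((1-t) * u 2 + t * v 2)) ^ 2 + D) ^ 2)⁻¹ := by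
    intro z
    have hcombo := combo hu hv t z
    rw [← hA, ← hD] at hcombo
    rw [← hcombo, mul_pow, mul_inv, ← mul_assoc,
      mul_inv_cancel₀ (by positivity : (A:ℝ)^2 ≠ 0), one_mul]
  simp_rw [key]
  rw [integral_const_mul, int_quad A _ _ D hApos hDpos]
  field_simp
lemma pair {u v : Fin 4 → ℝ} (hu : mink u u = 1) (hv : mink v v = 1)
    (hu0 : 0 < u 0) (hv0 : 0 < v 0) :
    ∫ z : ℝ × ℝ, (Qf u z * Qf v z)⁻¹
      = π * (lcoth (_root_.arcosh (mink u v)) / mink u v) := by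
  have hc := one_le_mink hu hv hu0 hv0
  set ν : Measure ℝ := volume.restrict (Set.Ioc (0:ℝ) 1) with hν
  -- pointwise Feynman
  have step1 : ∀ z : ℝ × ℝ, (Qf u z * Qf v z)⁻¹
      = ∫ t, ((Qf u z + t * (Qf v z - Qf u z)) ^ 2)⁻¹ ∂ν := by
    intro z
    rw [hν, ← intervalIntegral.integral_of_le (by norm_num : (0:ℝ) ≤ 1)]
    exact (feynman (Qf_pos hu hu0 z) (Qf_pos hv hv0 z)).symm
  -- a.e. membership in Ioc for the product measure
  have hae : ∀ᵐ p ∂((volume : Measure (ℝ × ℝ)).prod ν), p.2 ∈ Set.Ioc (0:ℝ) 1 := by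
    rw [ae_iff]
    have hset : {p : (ℝ × ℝ) × ℝ | ¬ p.2 ∈ Set.Ioc (0:ℝ) 1}
        = Set.univ ×ˢ (Set.Ioc (0:ℝ) 1)ᶜ := by
      ext p; simp
    rw [hset, Measure.prod_prod, hν,
      Measure.restrict_apply (measurableSet_Ioc.compl)]
    simp
  -- integrability of the joint function
  have hmeas : AEStronglyMeasurable
      (fun p : (ℝ × ℝ) × ℝ => ((Qf u p.1 + p.2 * (Qf v p.1 - Qf u p.1)) ^ 2)⁻¹)
      ((volume : Measure (ℝ × ℝ)).prod ν) := by
    apply Measurable.aestronglyMeasurable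
    have hcont : Continuous (fun p : (ℝ × ℝ) × ℝ =>
        (Qf u p.1 + p.2 * (Qf v p.1 - Qf u p.1)) ^ 2) := by
      have h1 := continuous_Qf u
      have h2 := continuous_Qf v
      fun_prop
    exact hcont.measurable.inv
  have hint : Integrable
      (fun p : (ℝ × ℝ) × ℝ => ((Qf u p.1 + p.2 * (Qf v p.1 - Qf u p.1)) ^ 2)⁻¹)
      ((volume : Measure (ℝ × ℝ)).prod ν) := by
    have hone : Integrable (fun _ : ℝ => (1:ℝ)) ν := by
      rw [hν]
      refine integrableOn_const ?_
      simp [Real.volume_Ioc]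
    have hg := Integrable.mul_prod (μ := (volume : Measure (ℝ × ℝ))) (ν := ν)
      (f := fun z : ℝ × ℝ => ((Qf u z) ^ 2)⁻¹ + ((Qf v z) ^ 2)⁻¹)
      (g := fun _ : ℝ => (1:ℝ))
      ((integrable_Qf_inv_sq hu hu0).add (integrable_Qf_inv_sq hv hv0)) hone
    have hg' : Integrable (fun p : (ℝ × ℝ) × ℝ =>
        ((Qf u p.1) ^ 2)⁻¹ + ((Qf v p.1) ^ 2)⁻¹) ((volume : Measure (ℝ × ℝ)).prod ν) := by
      simpa using hg
    apply hg'.mono' hmeas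
    filter_upwards [hae] with p hp
    obtain ⟨hp0, hp1⟩ := hp
    have hQu := Qf_pos hu hu0 p.1
    have hQv := Qf_pos hv hv0 p.1
    set S := Qf u p.1 + p.2 * (Qf v p.1 - Qf u p.1) with hS
    have hSpos : 0 < S := by
      rcases le_total (Qf u p.1) (Qf v p.1) with h | h
      · nlinarith
      · nlinarith
    rw [Real.norm_eq_abs, abs_of_nonneg (by positivity)]
    have key : (S ^ 2)⁻¹ ≤ ((Qf u p.1) ^ 2)⁻¹ + ((Qf v p.1) ^ 2)⁻¹ := by
      rcases le_total (Qf u p.1) (Qf v p.1) with h | h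
      · have hSge : Qf u p.1 ≤ S := by nlinarith
        have : (S ^ 2)⁻¹ ≤ ((Qf u p.1) ^ 2)⁻¹ :=
          inv_anti₀ (by positivity) (by nlinarith)
        have hnn : (0:ℝ) ≤ ((Qf v p.1) ^ 2)⁻¹ := by positivity
        linarith
      · have hSge : Qf v p.1 ≤ S := by nlinarith
        have : (S ^ 2)⁻¹ ≤ ((Qf v p.1) ^ 2)⁻¹ :=
          inv_anti₀ (by positivity) (by nlinarith)
        have hnn : (0:ℝ) ≤ ((Qf u p.1) ^ 2)⁻¹ := by positivity
        linarith
    exact key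
  -- swap
  have hswap := integral_integral_swap (f := fun (z : ℝ × ℝ) (t : ℝ) =>
    ((Qf u z + t * (Qf v z - Qf u z)) ^ 2)⁻¹) hint
  calc ∫ z : ℝ × ℝ, (Qf u z * Qf v z)⁻¹
      = ∫ z : ℝ × ℝ, ∫ t, ((Qf u z + t * (Qf v z - Qf u z)) ^ 2)⁻¹ ∂ν := by
        exact integral_congr_ae (Eventually.of_forall step1)
    _ = ∫ t, (∫ z : ℝ × ℝ, ((Qf u z + t * (Qf v z - Qf u z)) ^ 2)⁻¹) ∂ν := hswap
    _ = ∫ t, π * ((1 - t) ^ 2 + t ^ 2 + 2 * t * (1 - t) * mink u v)⁻¹ ∂ν := by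
        rw [hν]
        apply setIntegral_congr_fun measurableSet_Ioc
        intro t ht
        have ht' : t ∈ Set.Icc (0:ℝ) 1 := ⟨le_of_lt ht.1, ht.2⟩
        have := zint hu hv hu0 hv0 ht'
        simp only []
        rw [show (fun z : ℝ × ℝ => ((Qf u z + t * (Qf v z - Qf u z)) ^ 2)⁻¹)
            = fun z : ℝ × ℝ => (((1-t) * Qf u z + t * Qf v z) ^ 2)⁻¹ from
          funext fun z => by ring_nf]
        rw [this, div_eq_mul_inv]
    _ = π * ∫ t in (0:ℝ)..1, ((1 - t) ^ 2 + t ^ 2 + 2 * t * (1 - t) * mink u v)⁻¹ := by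
        rw [hν, ← intervalIntegral.integral_of_le (by norm_num : (0:ℝ) ≤ 1),
          intervalIntegral.integral_const_mul]
    _ = π * (lcoth (_root_.arcosh (mink u v)) / mink u v) := by
        rcases eq_or_lt_of_le hc with h | h
        · rw [← h]
          have : ∀ t : ℝ, (1 - t) ^ 2 + t ^ 2 + 2 * t * (1 - t) * (1:ℝ) = 1 := by
            intro t; ring
          simp only [← h] at *
          rw [show (fun t : ℝ => ((1 - t) ^ 2 + t ^ 2 + 2 * t * (1 - t) * (1:ℝ))⁻¹)
              = fun _ : ℝ => (1:ℝ) from funext fun t => by rw [this t]; norm_num]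
          rw [arcosh_one]
          simp [lcoth]
        · rw [tint h, lcoth_arcosh h]
          have h1 : (0:ℝ) ≤ (mink u v) ^ 2 - 1 := by nlinarith
          have hs : Real.sqrt ((mink u v) ^ 2 - 1) ≠ 0 :=
            ne_of_gt (Real.sqrt_pos.2 (by nlinarith))
          field_simp
lemma mink_symm (u v : Fin 4 → ℝ) : mink u v = mink v u := by
  simp only [mink]; ring

lemma integrable_QQ {u v : Fin 4 → ℝ} (hu : mink u u = 1) (hv : mink v v = 1)
    (hu0 : 0 < u 0) (hv0 : 0 < v 0) :
    Integrable (fun z : ℝ × ℝ => (Qf u z * Qf v z)⁻¹) := by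
  apply ((integrable_Qf_inv_sq hu hu0).add (integrable_Qf_inv_sq hv hv0)).mono'
  · apply Measurable.aestronglyMeasurable
    exact ((continuous_Qf u).mul (continuous_Qf v)).measurable.inv
  · refine Eventually.of_forall fun z => ?_
    have h1 := Qf_pos hu hu0 z
    have h2 := Qf_pos hv hv0 z
    rw [Real.norm_eq_abs, abs_of_nonneg (by positivity)]
    simp only [Pi.add_apply]
    rw [inv_eq_one_div, inv_eq_one_div, inv_eq_one_div,
      div_add_div _ _ (by positivity : (Qf u z)^2 ≠ 0) (by positivity : (Qf v z)^2 ≠ 0),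
      div_le_div_iff₀ (by positivity) (by positivity)]
    nlinarith [sq_nonneg (Qf u z - Qf v z), mul_pos h1 h2,
      mul_pos (mul_pos h1 h2) (mul_pos h1 h2)]

/-- bilinearity of mink in finite sums -/
lemma mink_sum_sum {N : ℕ} (w₁ w₂ : Fin N → ℝ) (U : Fin N → (Fin 4 → ℝ)) :
    mink (fun k => ∑ i, w₁ i * U i k) (fun k => ∑ j, w₂ j * U j k)
      = ∑ i, ∑ j, w₁ i * w₂ j * mink (U i) (U j) := by
  simp only [mink, Finset.sum_mul_sum, mul_sub, Finset.sum_sub_distrib]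
  congr 1 <;> [skip; exact Finset.sum_congr rfl fun i _ => Finset.sum_congr rfl fun j _ => by ring]
  congr 1 <;> [skip; exact Finset.sum_congr rfl fun i _ => Finset.sum_congr rfl fun j _ => by ring]
  congr 1 <;> [skip; exact Finset.sum_congr rfl fun i _ => Finset.sum_congr rfl fun j _ => by ring]
  exact Finset.sum_congr rfl fun i _ => Finset.sum_congr rfl fun j _ => by ring

lemma mink_sum_left {N : ℕ} (w : Fin N → ℝ) (U : Fin N → (Fin 4 → ℝ)) (n : Fin 4 → ℝ) :
    mink (fun k => ∑ i, w i * U i k) n = ∑ i, w i * mink (U i) n := by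
  simp only [mink, Finset.sum_mul]
  rw [← Finset.sum_sub_distrib, ← Finset.sum_sub_distrib, ← Finset.sum_sub_distrib]
  apply Finset.sum_congr rfl
  intro i _
  ring


lemma pointwise_nonpos {N : ℕ} (u : Fin N → (Fin 4 → ℝ)) (α : Fin N → ℂ)
    (hu : ∀ i, mink (u i) (u i) = 1) (hu0 : ∀ i, 0 < u i 0)
    (hα : ∑ i, α i = 0) (z : ℝ × ℝ) :
    ∑ i, ∑ j, ((starRingEnd ℂ) (α i) * α j).re
        * (mink (u i) (u j) * (Qf (u i) z * Qf (u j) z)⁻¹) ≤ 0 := by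
  set a : Fin N → ℝ := fun i => (α i).re with ha
  set b : Fin N → ℝ := fun i => (α i).im with hb
  set p : Fin N → ℝ := fun i => (Qf (u i) z)⁻¹ with hp
  have hre : ∀ i j, ((starRingEnd ℂ) (α i) * α j).re = a i * a j + b i * b j := by
    intro i j; simp [Complex.mul_re, ha, hb]
  have hsum : ∑ i, ∑ j, ((starRingEnd ℂ) (α i) * α j).re
        * (mink (u i) (u j) * (Qf (u i) z * Qf (u j) z)⁻¹)
      = (∑ i, ∑ j, (a i * p i) * (a j * p j) * mink (u i) (u j))
        + (∑ i, ∑ j, (b i * p i) * (b j * p j) * mink (u i) (u j)) := by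
    rw [← Finset.sum_add_distrib]
    refine Finset.sum_congr rfl fun i _ => ?_
    rw [← Finset.sum_add_distrib]
    refine Finset.sum_congr rfl fun j _ => ?_
    rw [hre i j, mul_inv]
    ring
  -- the two quadratic forms are Minkowski norms of vectors orthogonal to nul z
  have hQne : ∀ i, Qf (u i) z ≠ 0 := fun i => ne_of_gt (Qf_pos (hu i) (hu0 i) z)
  have key : ∀ w : Fin N → ℝ, (∑ i, w i = 0) →
      (∑ i, ∑ j, (w i * p i) * (w j * p j) * mink (u i) (u j)) ≤ 0 := by
    intro w hw
    rw [← mink_sum_sum (fun i => w i * p i) (fun i => w i * p i) u]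
    apply mink_nonpos_of_orth_null (nul_null z) (nul_zero_pos z)
    rw [mink_sum_left]
    have : ∀ i, w i * p i * mink (u i) (nul z) = w i := by
      intro i
      have : mink (u i) (nul z) = Qf (u i) z := rfl
      rw [this, hp, mul_assoc, inv_mul_cancel₀ (hQne i), mul_one]
    rw [Finset.sum_congr rfl fun i _ => this i]
    exact hw
  rw [hsum]
  have hare : ∑ i, a i = 0 := by
    have := congrArg Complex.re hα
    rwa [Complex.re_sum] at this
  have hbim : ∑ i, b i = 0 := by
    have := congrArg Complex.im hα
    rwa [Complex.im_sum] at this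
  have h1 := key a hare
  have h2 := key b hbim
  linarith

theorem sum_lcoth_nonpos_aux
    {N : ℕ} (u : Fin N → (Fin 4 → ℝ)) (α : Fin N → ℂ)
    (hu : ∀ i, mink (u i) (u i) = 1) (hu0 : ∀ i, 0 < u i 0)
    (hα : ∑ i, α i = 0) :
    ∑ i, ∑ j, (starRingEnd ℂ) (α i) * α j *
        (lcoth (_root_.arcosh (mink (u i) (u j))) : ℂ) ≤ 0 := by
  classical
  set L : Fin N → Fin N → ℝ := fun i j => lcoth (_root_.arcosh (mink (u i) (u j))) with hL
  have hLsymm : ∀ i j, L i j = L j i := by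
    intro i j; rw [hL]; simp only []; rw [mink_symm]
  set S : ℂ := ∑ i, ∑ j, (starRingEnd ℂ) (α i) * α j * (L i j : ℂ) with hS
  have hSre : S.re = ∑ i, ∑ j, ((starRingEnd ℂ) (α i) * α j).re * L i j := by
    rw [hS, Complex.re_sum]
    refine Finset.sum_congr rfl fun i _ => ?_
    rw [Complex.re_sum]
    refine Finset.sum_congr rfl fun j _ => ?_
    simp [Complex.mul_re]
  have hSim : S.im = 0 := by
    have h1 : S.im = ∑ i, ∑ j, ((starRingEnd ℂ) (α i) * α j).im * L i j := by
      rw [hS, Complex.im_sum]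
      refine Finset.sum_congr rfl fun i _ => ?_
      rw [Complex.im_sum]
      refine Finset.sum_congr rfl fun j _ => ?_
      simp [Complex.mul_im]
    have h2 : S.im = -S.im := by
      nth_rewrite 1 [h1]
      rw [Finset.sum_comm]
      rw [h1, ← Finset.sum_neg_distrib]
      refine Finset.sum_congr rfl fun j _ => ?_
      rw [← Finset.sum_neg_distrib]
      refine Finset.sum_congr rfl fun i _ => ?_
      rw [hLsymm j i]
      have : ((starRingEnd ℂ) (α j) * α i).im = -((starRingEnd ℂ) (α i) * α j).im := by
        simp [Complex.mul_im]; ring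
      rw [this]
      ring
    linarith
  -- the real part is nonpositive
  have hc : ∀ i j, 1 ≤ mink (u i) (u j) :=
    fun i j => one_le_mink (hu i) (hu j) (hu0 i) (hu0 j)
  have hLint : ∀ i j, π * L i j
      = ∫ z : ℝ × ℝ, mink (u i) (u j) * (Qf (u i) z * Qf (u j) z)⁻¹ := by
    intro i j
    rw [integral_const_mul, pair (hu i) (hu j) (hu0 i) (hu0 j)]
    have hne : mink (u i) (u j) ≠ 0 := by have := hc i j; linarith
    rw [hL]
    field_simp
  have hmain : π * S.re ≤ 0 := by
    have : π * S.re = ∫ z : ℝ × ℝ, ∑ i, ∑ j, ((starRingEnd ℂ) (α i) * α j).re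
        * (mink (u i) (u j) * (Qf (u i) z * Qf (u j) z)⁻¹) := by
      rw [integral_finset_sum]
      · rw [hSre, Finset.mul_sum]
        refine Finset.sum_congr rfl fun i _ => ?_
        rw [integral_finset_sum]
        · rw [Finset.mul_sum]
          refine Finset.sum_congr rfl fun j _ => ?_
          rw [integral_const_mul, ← hLint i j]
          ring
        · intro j _
          exact (((integrable_QQ (hu i) (hu j) (hu0 i) (hu0 j)).const_mul
            (mink (u i) (u j))).const_mul _)
      · intro i _
        apply integrable_finset_sum
        intro j _
        exact (((integrable_QQ (hu i) (hu j) (hu0 i) (hu0 j)).const_mul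
          (mink (u i) (u j))).const_mul _)
    rw [this]
    apply integral_nonpos
    intro z
    exact pointwise_nonpos u α hu hu0 hα z
  have hSre_nonpos : S.re ≤ 0 := by nlinarith [Real.pi_pos]
  rw [Complex.le_def]
  constructor
  · simpa using hSre_nonpos
  · simpa using hSim

end LcothAux

/-- For future-pointing unit timelike vectors `u₁,…,u_N` and complex numbers
`α₁,…,α_N` with `Σᵢ αᵢ = 0`, we have `Σᵢⱼ conj(αᵢ) αⱼ λᵢⱼ coth λᵢⱼ ≤ 0`,
where `cosh λᵢⱼ = uᵢ·uⱼ` and `λ coth λ := 1` at `λ = 0`. -/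
theorem sum_lcoth_nonpos
    {N : ℕ} (u : Fin N → (Fin 4 → ℝ)) (α : Fin N → ℂ)
    (hu : ∀ i, mink (u i) (u i) = 1) (hu0 : ∀ i, 0 < u i 0)
    (hα : ∑ i, α i = 0) :
    ∑ i, ∑ j, (starRingEnd ℂ) (α i) * α j *
        (lcoth (arcosh (mink (u i) (u j))) : ℂ) ≤ 0 :=
  LcothAux.sum_lcoth_nonpos_aux u α hu hu0 hα
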